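/- arXiv:1811.08420 — 4 statements merged into one kernel-verified Lean document; each statement's English description precedes it below -/
import Mathlib

section
/- Let P : ℤ → ℤ be a parent function with P(0) = 0 and P(−1) = −1 (equivalently, min P⁻¹({0}) = 0). Define u : ℤ → ℤ by u(i) = |P⁻¹({i})| (which is a well-defined positive integer), and let Δ be the accumulation function of u. Then for all i, j ∈ ℤ: P(j) = i if and only if Δ(i) ≤ j ≤ Δ(i+1) − 1. -/
/-- The accumulation function of a bi-infinite sequence `u : ℤ → ℤ`:
`Δ(i) = ∑_{k=0}^{i-1} u(k)` for `i ≥ 1`, `Δ(0) = 0`, and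
`Δ(i) = -∑_{k=i}^{-1} u(k)` for `i ≤ -1`. -/
def accum (u : ℤ → ℤ) (i : ℤ) : ℤ :=
  if 0 ≤ i then ∑ k ∈ Finset.range i.toNat, u (k : ℤ)
  else -(∑ k ∈ Finset.range (-i).toNat, u (i + (k : ℤ)))

lemma accum_succ (u : ℤ → ℤ) (i : ℤ) : accum u (i + 1) = accum u i + u i := by
  unfold accum
  rcases le_or_gt 0 i with h | h
  · rw [if_pos (show (0:ℤ) ≤ i + 1 by omega), if_pos h]
    have h1 : (i + 1).toNat = i.toNat + 1 := by omega
    rw [h1, Finset.sum_range_succ, Int.toNat_of_nonneg h]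
  · rcases eq_or_lt_of_le (show i + 1 ≤ 0 by omega) with he | hlt
    · rw [if_pos (show (0:ℤ) ≤ i + 1 by omega), if_neg (show ¬ (0:ℤ) ≤ i by omega)]
      have hi : i = -1 := by omega
      subst hi
      simp
    · rw [if_neg (show ¬ (0:ℤ) ≤ i + 1 by omega), if_neg (show ¬ (0:ℤ) ≤ i by omega)]
      have hn : (-i).toNat = (-(i + 1)).toNat + 1 := by omega
      rw [hn, Finset.sum_range_succ']
      have hsum : ∑ x ∈ Finset.range (-(i + 1)).toNat, u (i + ((x : ℕ) + 1 : ℕ)) =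
          ∑ x ∈ Finset.range (-(i + 1)).toNat, u (i + 1 + (x : ℤ)) := by
        refine Finset.sum_congr rfl fun x _ => ?_
        congr 1
        push_cast
        ring
      rw [hsum]
      simp only [Nat.cast_zero, add_zero]
      ring

lemma accum_eq_of (u f : ℤ → ℤ) (hf0 : f 0 = 0)
    (hstep : ∀ i : ℤ, f (i + 1) = f i + u i) : ∀ i, accum u i = f i := by
  intro i
  induction i using Int.induction_on with
  | zero => simp [accum, hf0]
  | succ n ih => rw [accum_succ, ih, hstep]
  | pred n ih =>
      have h1 := accum_succ u (-(n : ℤ) - 1)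
      have h2 := hstep (-(n : ℤ) - 1)
      have h3 : -(n : ℤ) - 1 + 1 = -(n : ℤ) := by ring
      rw [h3] at h1 h2
      omega

/-- Let `P : ℤ → ℤ` be a parent function (surjective, monotone) with
`P 0 = 0` and `P (-1) = -1` (equivalently `min P⁻¹({0}) = 0`).  Let `u i` be the
cardinality of the fiber `P⁻¹({i})` (a well-defined positive integer) and `Δ` the
accumulation function of `u`.  Then `P j = i ↔ Δ i ≤ j ≤ Δ (i+1) - 1`. -/
theorem parent_function_eq_accum_intervals (P : ℤ → ℤ)
    (hsurj : Function.Surjective P) (hmono : Monotone P)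
    (h0 : P 0 = 0) (hm1 : P (-1) = -1)
    (u : ℤ → ℤ) (hu : ∀ i : ℤ, u i = (({j : ℤ | P j = i}).ncard : ℤ)) :
    (∀ i : ℤ, 1 ≤ u i) ∧
    ∀ i j : ℤ, P j = i ↔ (accum u i ≤ j ∧ j ≤ accum u (i + 1) - 1) := by
  -- existence of a least element of each fiber
  have hm : ∀ i : ℤ, ∃ m : ℤ, P m = i ∧ ∀ j, P j = i → m ≤ j := by
    intro i
    obtain ⟨j₀, hj₀⟩ := hsurj (i - 1)
    obtain ⟨j, hj⟩ := hsurj i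
    have hbdd : ∀ z : ℤ, P z = i → j₀ + 1 ≤ z := by
      intro z hz
      by_contra hc
      have : P z ≤ P j₀ := hmono (by omega)
      omega
    classical
    obtain ⟨lb, hlb1, hlb2⟩ := Int.exists_least_of_bdd (P := fun z => P z = i)
      ⟨j₀ + 1, hbdd⟩ ⟨j, hj⟩
    exact ⟨lb, hlb1, hlb2⟩
  choose m hmP hmle using hm
  -- key: m i ≤ j ↔ i ≤ P j
  have hkey : ∀ i j : ℤ, m i ≤ j ↔ i ≤ P j := by
    intro i j
    constructor
    · intro h
      calc i = P (m i) := (hmP i).symm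
        _ ≤ P j := hmono h
    · intro h
      by_contra hc
      push_neg at hc
      have h1 : P j ≤ P (m i) := hmono (le_of_lt hc)
      rw [hmP i] at h1
      have : P j = i := le_antisymm h1 h
      exact absurd (hmle i j this) (by omega)
  -- characterization of fibers
  have hchar : ∀ i j : ℤ, P j = i ↔ (m i ≤ j ∧ j < m (i + 1)) := by
    intro i j
    constructor
    · intro h
      refine ⟨(hkey i j).mpr h.ge, ?_⟩
      by_contra hc
      push_neg at hc
      have := (hkey (i + 1) j).mp hc
      omega
    · rintro ⟨h1, h2⟩
      have ha := (hkey i j).mp h1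
      have hb : ¬ (i + 1 ≤ P j) := fun hx => absurd ((hkey (i + 1) j).mpr hx) (by omega)
      omega
  -- m is strictly increasing at each step, m 0 = 0
  have hmlt : ∀ i : ℤ, m i < m (i + 1) := by
    intro i
    by_contra hc
    push_neg at hc
    have := (hkey (i + 1) (m i)).mpr ((hkey (i + 1) (m i)).mp hc)
    have h2 := (hkey (i + 1) (m i)).mp hc
    rw [hmP i] at h2
    omega
  have hm0 : m 0 = 0 := by
    have h1 : m 0 ≤ 0 := hmle 0 0 h0
    have h2 : ¬ (m 0 ≤ -1) := by
      intro hc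
      have := (hkey 0 (-1)).mp hc
      rw [hm1] at this
      omega
    omega
  -- u i = m (i+1) - m i
  have huval : ∀ i : ℤ, u i = m (i + 1) - m i := by
    intro i
    rw [hu i]
    have hset : {j : ℤ | P j = i} = Set.Ico (m i) (m (i + 1)) := by
      ext j
      simp [hchar i j, Set.mem_Ico]
    rw [hset, ← Finset.coe_Ico, Set.ncard_coe_finset, Int.card_Ico]
    have := hmlt i
    omega
  have hupos : ∀ i : ℤ, 1 ≤ u i := by
    intro i
    rw [huval i]
    have := hmlt i
    omega
  have haccum : ∀ i : ℤ, accum u i = m i := by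
    apply accum_eq_of u m hm0
    intro i
    rw [huval i]
    ring
  refine ⟨hupos, fun i j => ?_⟩
  rw [haccum i, haccum (i + 1), hchar i j]
  omega
end

section
/- Let (A, R) be a non-deterministic substitution with an expanding eigenvalue λ > 1 witnessed by v : A → ℝ with v(a) > 0 for all a, and let Ω = {(ω^i, P_i)}_{i∈ℤ} be an orbit of (A, R). Then there exists a function Ψ : ℤ × ℤ → ℝ × ℝ with Ψ(0,0) = (0,0) such that for all (i,j) ∈ ℤ², writing Ψ(i,j) = (x,y): (1) Ψ(i, j+1) = (x + v(ω^i_j)·e^y, y), and (2) Ψ(i+1, min P_{i+1}⁻¹({j})) = (x, y − log λ). -/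
/-- `P : ℤ → ℤ` is a parent function: surjective and non-decreasing. -/
def IsParent (P : ℤ → ℤ) : Prop := Function.Surjective P ∧ Monotone P

/-- The bi-infinite word `ω` produces `ω'` with respect to the parent function `P`
under the relation `R ⊆ A × A*`: for every `i` there is a production rule `(ω i, w) ∈ R`
whose right-hand side `w` has length `|P⁻¹({i})|` and is the subword of `ω'` carried by
the fiber `P⁻¹({i})` (read from its minimum `sInf P⁻¹({i})`). -/
def Produces {A : Type*} (R : Set (A × List A)) (P : ℤ → ℤ) (ω ω' : ℤ → A) : Prop :=
  ∀ i : ℤ, ∃ w : List A, (ω i, w) ∈ R ∧ w.length = ({j : ℤ | P j = i}).ncard ∧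
    ∀ (k : ℕ) (hk : k < w.length), w.get ⟨k, hk⟩ = ω' (sInf {j : ℤ | P j = i} + (k : ℤ))

/-- An orbit of the non-deterministic substitution `(A, R)`: a family of bi-infinite
words `ω i` and parent functions `P i` such that `ω i` produces `ω (i+1)` with respect
to `P (i+1)`. -/
def IsOrbit {A : Type*} (R : Set (A × List A)) (ω : ℤ → ℤ → A) (P : ℤ → ℤ → ℤ) : Prop :=
  (∀ i : ℤ, IsParent (P i)) ∧ ∀ i : ℤ, Produces R (P (i + 1)) (ω i) (ω (i + 1))

lemma sum_Ico_succ (f : ℤ → ℝ) {a b : ℤ} (h : a ≤ b) :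
    ∑ k ∈ Finset.Ico a (b+1), f k = (∑ k ∈ Finset.Ico a b, f k) + f b := by
  rw [← Finset.Ico_union_Ico_eq_Ico h (by omega : b ≤ b + 1),
    Finset.sum_union (Finset.Ico_disjoint_Ico_consecutive a b (b+1)),
    show Finset.Ico b (b+1) = {b} from by ext x; simp; omega,
    Finset.sum_singleton]

lemma sum_Ico_bot (f : ℤ → ℝ) {a b : ℤ} (h : a < b) :
    ∑ k ∈ Finset.Ico a b, f k = f a + ∑ k ∈ Finset.Ico (a+1) b, f k := by
  rw [← Finset.Ico_union_Ico_eq_Ico (by omega : a ≤ a + 1) (by omega : a + 1 ≤ b),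
    Finset.sum_union (Finset.Ico_disjoint_Ico_consecutive a (a+1) b),
    show Finset.Ico a (a+1) = {a} from by ext x; simp; omega,
    Finset.sum_singleton]

/-- Signed cumulative sum of `f : ℤ → ℝ` from `0` to `j`. -/
noncomputable def cum (f : ℤ → ℝ) (j : ℤ) : ℝ :=
  (∑ k ∈ Finset.Ico 0 j, f k) - ∑ k ∈ Finset.Ico j 0, f k

lemma cum_zero (f : ℤ → ℝ) : cum f 0 = 0 := by simp [cum]

lemma cum_succ (f : ℤ → ℝ) (j : ℤ) : cum f (j + 1) = cum f j + f j := by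
  rcases le_or_gt 0 j with h | h
  · have h2 : Finset.Ico (j+1) (0:ℤ) = ∅ := Finset.Ico_eq_empty (by omega)
    have h3 : Finset.Ico j (0:ℤ) = ∅ := Finset.Ico_eq_empty (by omega)
    rw [cum, cum, sum_Ico_succ f h, h2, h3]
    simp
  · have h2 : Finset.Ico (0:ℤ) (j+1) = ∅ := Finset.Ico_eq_empty (by omega)
    have h3 : Finset.Ico (0:ℤ) j = ∅ := Finset.Ico_eq_empty (by omega)
    rw [cum, cum, h2, h3, sum_Ico_bot f (show j < 0 by omega)]
    ring

lemma cum_ge (f : ℤ → ℝ) {a b : ℤ} (h : a ≤ b) :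
    cum f b = cum f a + ∑ k ∈ Finset.Ico a b, f k := by
  refine Int.le_induction
    (motive := fun n _ => cum f n = cum f a + ∑ k ∈ Finset.Ico a n, f k) ?_ ?_ b h
  · simp
  · intro n hn ih
    rw [cum_succ, ih, sum_Ico_succ f hn]
    ring

/-- The fibers of a parent function are consecutive finite intervals. -/
lemma fiber_structure {Q : ℤ → ℤ} (hQ : IsParent Q) (j : ℤ) :
    sInf {k : ℤ | Q k = j + 1} = sInf {k : ℤ | Q k = j} + ({k : ℤ | Q k = j}).ncard := by
  obtain ⟨hs, hm⟩ := hQ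
  obtain ⟨k, hk⟩ := hs j
  obtain ⟨k0, hk0⟩ := hs (j - 1)
  obtain ⟨k1, hk1⟩ := hs (j + 1)
  set S := {k : ℤ | Q k = j} with hS
  have hne : S.Nonempty := ⟨k, hk⟩
  have hlb : ∀ x ∈ S, k0 < x := by
    intro x hx
    by_contra hc
    push_neg at hc
    have := hm hc
    simp only [hS, Set.mem_setOf_eq] at hx
    omega
  have hub : ∀ x ∈ S, x < k1 := by
    intro x hx
    by_contra hc
    push_neg at hc
    have := hm hc
    simp only [hS, Set.mem_setOf_eq] at hx
    omega
  have hbdd : BddBelow S := ⟨k0 + 1, fun x hx => by have := hlb x hx; omega⟩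
  have hbdd' : BddAbove S := ⟨k1, fun x hx => le_of_lt (hub x hx)⟩
  set a := sInf S with ha'
  set b := sSup S with hb'
  have ha : a ∈ S := Int.csInf_mem hne hbdd
  have hb : b ∈ S := Int.csSup_mem hne hbdd'
  have hab : a ≤ b := csInf_le hbdd hb
  have hSIcc : S = Set.Icc a b := by
    ext x
    constructor
    · intro hx
      exact ⟨csInf_le hbdd hx, le_csSup hbdd' hx⟩
    · rintro ⟨h1, h2⟩
      have q1 := hm h1
      have q2 := hm h2
      simp only [hS, Set.mem_setOf_eq] at ha hb ⊢
      omega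
  have hncard : (S.ncard : ℤ) = b + 1 - a := by
    rw [hSIcc, ← Finset.coe_Icc, Set.ncard_coe_finset, Int.card_Icc]
    omega
  have hbS : Q b = j := hb
  have hQb1 : Q (b + 1) = j + 1 := by
    have h1 : Q b ≤ Q (b + 1) := hm (by omega)
    have h2 : Q (b + 1) ≤ Q k1 := hm (by have := hub b hb; omega)
    have h3 : Q (b + 1) ≠ j := by
      intro hc
      have : b + 1 ∈ S := hc
      have := le_csSup hbdd' this
      omega
    omega
  have hlb1 : ∀ x ∈ {k : ℤ | Q k = j + 1}, b + 1 ≤ x := by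
    intro x hx
    simp only [Set.mem_setOf_eq] at hx
    by_contra hc
    push_neg at hc
    have := hm (show x ≤ b by omega)
    omega
  have : sInf {k : ℤ | Q k = j + 1} = b + 1 :=
    le_antisymm (csInf_le ⟨b + 1, hlb1⟩ hQb1) (le_csInf ⟨b + 1, hQb1⟩ hlb1)
  omega

lemma sum_Ico_add_range (f : ℤ → ℝ) (a : ℤ) (n : ℕ) :
    ∑ k ∈ Finset.Ico a (a + (n : ℤ)), f k = ∑ t ∈ Finset.range n, f (a + t) := by
  induction n with
  | zero => simp
  | succ n ih =>
      have : a + ((n + 1 : ℕ) : ℤ) = (a + (n : ℤ)) + 1 := by push_cast; ring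
      rw [this, sum_Ico_succ f (by omega), ih, Finset.sum_range_succ]

lemma list_sum_map {A : Type*} (v : A → ℝ) (w : List A) :
    (w.map v).sum = ∑ i : Fin w.length, v (w.get i) := by
  conv_lhs => rw [← List.ofFn_get w]
  rw [List.map_ofFn, List.sum_ofFn]
  rfl

/-- Key step: the cumulative sum of the level-`i+1` weights over the fiber of `j`
equals the level-`i` weight of `j`. -/
lemma key_step {A : Type*} (R : Set (A × List A)) (lam : ℝ) (v : A → ℝ)
    (hlam0 : 0 < lam)
    (hexp : ∀ p ∈ R, lam * v p.1 = (p.2.map v).sum)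
    {Q : ℤ → ℤ} (hQ : IsParent Q) {ω0 ω1 : ℤ → A}
    (hpr : Produces R Q ω0 ω1) (i j : ℤ) :
    cum (fun k => v (ω1 k) * lam ^ (-(i+1))) (sInf {k : ℤ | Q k = j + 1}) =
      cum (fun k => v (ω1 k) * lam ^ (-(i+1))) (sInf {k : ℤ | Q k = j}) +
        v (ω0 j) * lam ^ (-i) := by
  obtain ⟨w, hwR, hwlen, hwget⟩ := hpr j
  set a := sInf {k : ℤ | Q k = j} with ha
  have hstep : sInf {k : ℤ | Q k = j + 1} = a + w.length := by
    rw [fiber_structure hQ j, hwlen]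
  rw [hstep, cum_ge _ (by omega : a ≤ a + (w.length : ℤ))]
  have h1 : ∑ k ∈ Finset.Ico a (a + (w.length : ℤ)), v (ω1 k) * lam ^ (-(i+1)) =
      ∑ t ∈ Finset.range w.length, v (ω1 (a + t)) * lam ^ (-(i+1)) :=
    sum_Ico_add_range _ a w.length
  have h2 : ∑ t ∈ Finset.range w.length, v (ω1 (a + t)) * lam ^ (-(i+1)) =
      (∑ t ∈ Finset.range w.length, v (ω1 (a + t))) * lam ^ (-(i+1)) :=
    (Finset.sum_mul ..).symm
  have h3 : ∑ t ∈ Finset.range w.length, v (ω1 (a + t)) = (w.map v).sum := by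
    rw [list_sum_map, ← Fin.sum_univ_eq_sum_range (fun t : ℕ => v (ω1 (a + (t : ℤ)))) w.length]
    exact Finset.sum_congr rfl fun t _ => (congrArg v (hwget t.1 t.isLt)).symm
  have h4 : (w.map v).sum = lam * v (ω0 j) := (hexp _ hwR).symm
  have h5 : lam * v (ω0 j) * lam ^ (-(i+1)) = v (ω0 j) * lam ^ (-i) := by
    have hz : lam * lam ^ (-(i+1)) = lam ^ (-i) := by
      rw [← zpow_one_add₀ (ne_of_gt hlam0)]
      congr 1
      ring
    calc lam * v (ω0 j) * lam ^ (-(i+1)) = v (ω0 j) * (lam * lam ^ (-(i+1))) := by ring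
    _ = v (ω0 j) * lam ^ (-i) := by rw [hz]
  rw [h1, h2, h3, h4, h5]


/-- If the non-deterministic substitution `(A, R)` has an expanding
eigenvalue `λ > 1` witnessed by `v : A → ℝ` with `v a > 0`, then every orbit
`Ω = {(ω^i, P_i)}` admits a tiling `Ψ : ℤ × ℤ → ℝ × ℝ` with `Ψ(0,0) = (0,0)`,
`Ψ(i, j+1) = (x + v(ω^i_j)·e^y, y)` and `Ψ(i+1, min P_{i+1}⁻¹({j})) = (x, y - log λ)`
where `(x, y) = Ψ(i, j)`. -/
theorem orbit_has_tiling {A : Type*} [Fintype A]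
    (R : Set (A × List A)) (hRfin : R.Finite)
    (lam : ℝ) (v : A → ℝ) (hlam : 1 < lam) (hv : ∀ a : A, 0 < v a)
    (hexp : ∀ p ∈ R, lam * v p.1 = (p.2.map v).sum)
    (ω : ℤ → ℤ → A) (P : ℤ → ℤ → ℤ) (horb : IsOrbit R ω P) :
    ∃ Ψ : ℤ × ℤ → ℝ × ℝ, Ψ (0, 0) = (0, 0) ∧
      ∀ i j : ℤ,
        Ψ (i, j + 1) = ((Ψ (i, j)).1 + v (ω i j) * Real.exp (Ψ (i, j)).2, (Ψ (i, j)).2) ∧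
        Ψ (i + 1, sInf {k : ℤ | P (i + 1) k = j}) =
          ((Ψ (i, j)).1, (Ψ (i, j)).2 - Real.log lam) := by
  obtain ⟨hP, hprod⟩ := horb
  have hlam0 : (0:ℝ) < lam := lt_trans one_pos hlam
  set f : ℤ → ℤ → ℝ := fun i k => v (ω i k) * lam ^ (-i) with hf
  set c : ℤ → ℝ := fun i =>
    - cum (fun t => cum (f (t+1)) (sInf {k : ℤ | P (t+1) k = 0})) i with hcdef
  have hcsucc : ∀ i : ℤ, c (i+1) = c i - cum (f (i+1)) (sInf {k : ℤ | P (i+1) k = 0}) := by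
    intro i
    simp only [hcdef, cum_succ]
    ring
  refine ⟨fun p => (c p.1 + cum (f p.1) p.2, -(p.1 : ℝ) * Real.log lam), ?_, ?_⟩
  · simp [hcdef, cum_zero]
  · intro i j
    have hexpy : Real.exp (-(i:ℝ) * Real.log lam) = lam ^ (-i) := by
      rw [show -(i:ℝ) * Real.log lam = Real.log lam * ((-i : ℤ) : ℝ) by push_cast; ring,
        ← Real.rpow_def_of_pos hlam0, Real.rpow_intCast]
    constructor
    · simp only [cum_succ]
      have : v (ω i j) * Real.exp (-(i:ℝ) * Real.log lam) = f i j := by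
        rw [hexpy]
      rw [Prod.mk.injEq]
      constructor
      · rw [← this]; ring
      · rfl
    · -- second condition
      have hx : ∀ j' : ℤ, c (i+1) + cum (f (i+1)) (sInf {k : ℤ | P (i+1) k = j'}) =
          c i + cum (f i) j' := by
        have hstep : ∀ j' : ℤ,
            (c (i+1) + cum (f (i+1)) (sInf {k : ℤ | P (i+1) k = (j'+1)})) -
              (c i + cum (f i) (j'+1)) =
            (c (i+1) + cum (f (i+1)) (sInf {k : ℤ | P (i+1) k = j'})) -
              (c i + cum (f i) j') := by
          intro j'
          have hk := key_step R lam v hlam0 hexp (hP (i+1)) (hprod i) i j'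
          rw [cum_succ]
          simp only [hf] at hk ⊢
          rw [hk]
          ring
        have h0 : (c (i+1) + cum (f (i+1)) (sInf {k : ℤ | P (i+1) k = 0})) -
            (c i + cum (f i) 0) = 0 := by
          rw [cum_zero, hcsucc i]
          ring
        intro j'
        have : ∀ n : ℤ, (c (i+1) + cum (f (i+1)) (sInf {k : ℤ | P (i+1) k = n})) -
            (c i + cum (f i) n) = 0 := by
          intro n
          induction n using Int.induction_on with
          | zero => exact h0
          | succ k ih => rw [hstep k]; exact ih
          | pred k ih =>
              have h := hstep (-(k:ℤ) - 1)
              rw [show -(k:ℤ) - 1 + 1 = -(k:ℤ) by ring] at h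
              rw [← h]
              exact ih
        have := this j'
        linarith
      rw [Prod.mk.injEq]
      constructor
      · exact hx j
      · push_cast
        ring
end

section
/- Let A be a finite alphabet and let R₁, R₂ ⊆ A × A* be finite sets of production rules. Define the composite relation R₁ ⋆ R₂ as the set of pairs (a, c¹c²⋯c^k) such that there exists (a, b₁b₂⋯b_k) ∈ R₁ with (b_i, cⁱ) ∈ R₂ for every 1 ≤ i ≤ k (where c¹c²⋯c^k denotes concatenation). Suppose ω produces ω' with respect to a parent function P under the relation R₁, and ω' produces ω'' with respect to a parent function Q under the relation R₂. Then P ∘ Q is a parent function, and ω produces ω'' with respect to P ∘ Q under the relation R₁ ⋆ R₂. -/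
/-- The composite relation `R₁ ⋆ R₂`: all pairs `(a, c¹c²⋯cᵏ)` such that there is
`(a, b₁⋯b_k) ∈ R₁` with `(b_i, cⁱ) ∈ R₂` for every `i`, the `cⁱ` being concatenated
in order. -/
def RelComp {A : Type*} (R₁ R₂ : Set (A × List A)) : Set (A × List A) :=
  { p | ∃ (bs : List A) (cs : List (List A)),
      (p.1, bs) ∈ R₁ ∧ List.Forall₂ (fun b c => (b, c) ∈ R₂) bs cs ∧ p.2 = cs.flatten }

namespace ProducesCompAux

def pfib (P : ℤ → ℤ) (i : ℤ) : Set ℤ := {j | P j = i}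
noncomputable def pA (P : ℤ → ℤ) (i : ℤ) : ℤ := sInf (pfib P i)
noncomputable def pN (P : ℤ → ℤ) (i : ℤ) : ℕ := (pfib P i).ncard

variable {P Q : ℤ → ℤ}

lemma pfib_nonempty (hP : IsParent P) (i : ℤ) : (pfib P i).Nonempty := hP.1 i

lemma pfib_finite (hP : IsParent P) (i : ℤ) : (pfib P i).Finite := by
  obtain ⟨j1, h1⟩ := hP.1 (i - 1)
  obtain ⟨j2, h2⟩ := hP.1 (i + 1)
  apply (Set.finite_Ioo j1 j2).subset
  intro j hj
  have hj' : P j = i := hj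
  constructor
  · by_contra h
    push_neg at h
    have := hP.2 h
    omega
  · by_contra h
    push_neg at h
    have := hP.2 h
    omega

lemma pA_mem (hP : IsParent P) (i : ℤ) : P (pA P i) = i :=
  (pfib_nonempty hP i).csInf_mem (pfib_finite hP i)

lemma pN_pos (hP : IsParent P) (i : ℤ) : 1 ≤ pN P i :=
  (Set.ncard_pos (pfib_finite hP i)).2 (pfib_nonempty hP i)

lemma pfib_mem_iff (hP : IsParent P) (i j : ℤ) :
    P j = i ↔ pA P i ≤ j ∧ j < pA P i + pN P i := by
  have hfin := pfib_finite hP i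
  have hne := pfib_nonempty hP i
  have hmem : P (pA P i) = i := pA_mem hP i
  have hmemS : sSup (pfib P i) ∈ pfib P i := hne.csSup_mem hfin
  have hmemS' : P (sSup (pfib P i)) = i := hmemS
  have hle : pA P i ≤ sSup (pfib P i) := by
    have : pA P i ∈ pfib P i := hmem
    exact le_csSup hfin.bddAbove this
  have hIcc : pfib P i = Set.Icc (pA P i) (sSup (pfib P i)) := by
    ext j
    constructor
    · intro hj
      exact ⟨csInf_le hfin.bddBelow hj, le_csSup hfin.bddAbove hj⟩
    · rintro ⟨h1, h2⟩
      have l1 : P (pA P i) ≤ P j := hP.2 h1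
      have l2 : P j ≤ P (sSup (pfib P i)) := hP.2 h2
      show P j = i
      omega
  have hcard : (pN P i : ℤ) = sSup (pfib P i) - pA P i + 1 := by
    have h1 : pN P i = (Set.Icc (pA P i) (sSup (pfib P i))).ncard := congrArg Set.ncard hIcc
    rw [h1, ← Finset.coe_Icc, Set.ncard_coe_finset, Int.card_Icc]
    omega
  constructor
  · intro hj
    have hj' : j ∈ pfib P i := hj
    have u1 := csInf_le hfin.bddBelow hj'
    have u2 := le_csSup hfin.bddAbove hj'
    exact ⟨u1, by omega⟩
  · rintro ⟨h1, h2⟩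
    have : j ∈ pfib P i := by
      rw [hIcc]
      exact ⟨h1, by omega⟩
    exact this

lemma pA_succ (hP : IsParent P) (i : ℤ) : pA P (i + 1) = pA P i + pN P i := by
  have hiff := pfib_mem_iff hP i
  have hiff' := pfib_mem_iff hP (i + 1)
  have hn := pN_pos hP i
  have hmem1 : P (pA P (i + 1)) = i + 1 := pA_mem hP (i + 1)
  have hmem0 : P (pA P i) = i := pA_mem hP i
  have hge : pA P i + pN P i ≤ pA P (i + 1) := by
    by_contra h
    push_neg at h
    have h0 : pA P i ≤ pA P (i + 1) := by
      by_contra h'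
      push_neg at h'
      have := hP.2 h'.le
      omega
    have := (hiff (pA P (i + 1))).2 ⟨h0, h⟩
    omega
  have hval : P (pA P i + pN P i) = i + 1 := by
    have hub : P (pA P i + pN P i) ≤ P (pA P (i + 1)) := hP.2 hge
    have hlb : P (pA P i + pN P i - 1) ≤ P (pA P i + pN P i) := hP.2 (by omega)
    have e1 : P (pA P i + pN P i - 1) = i := (hiff _).2 ⟨by omega, by omega⟩
    have hne : P (pA P i + pN P i) ≠ i := by
      intro h
      have := (hiff _).1 h
      omega
    omega
  have := (hiff' _).1 hval
  omega

lemma isParent_comp (hP : IsParent P) (hQ : IsParent Q) : IsParent (P ∘ Q) :=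
  ⟨hP.1.comp hQ.1, hP.2.comp hQ.2⟩

lemma pA_comp (hP : IsParent P) (hQ : IsParent Q) (i : ℤ) :
    pA (P ∘ Q) i = pA Q (pA P i) := by
  have hPQ := isParent_comp hP hQ
  have hfin := pfib_finite hPQ i
  have hmemP : P (pA P i) = i := pA_mem hP i
  have hmemQ : Q (pA Q (pA P i)) = pA P i := pA_mem hQ (pA P i)
  apply le_antisymm
  · apply csInf_le hfin.bddBelow
    show P (Q (pA Q (pA P i))) = i
    rw [hmemQ, hmemP]
  · apply le_csInf (pfib_nonempty hPQ i)
    intro k hk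
    have hk' : P (Q k) = i := hk
    by_contra h
    push_neg at h
    have h1 : Q k ≤ Q (pA Q (pA P i)) := hQ.2 h.le
    have h2 : Q k ≠ pA P i := by
      intro he
      have hm : k ∈ pfib Q (pA P i) := he
      have : pA Q (pA P i) ≤ k := csInf_le (pfib_finite hQ _).bddBelow hm
      omega
    have hm' : Q k ∈ pfib P i := hk'
    have h3 : pA P i ≤ Q k := csInf_le (pfib_finite hP i).bddBelow hm'
    omega

lemma flatten_len_get {A : Type*} (c : ℤ → List A) (aQ : ℤ → ℤ) (g : ℤ → A)
    (hlen : ∀ j : ℤ, aQ (j + 1) = aQ j + (c j).length)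
    (hget : ∀ (j : ℤ) (k : ℕ) (hk : k < (c j).length), (c j)[k] = g (aQ j + k))
    (a : ℤ) (n : ℕ) :
    ((((List.range n).map (fun k : ℕ => c (a + k))).flatten.length : ℤ)
        = aQ (a + n) - aQ a)
      ∧ ∀ (t : ℕ) (ht : t < (((List.range n).map (fun k : ℕ => c (a + k))).flatten).length),
          (((List.range n).map (fun k : ℕ => c (a + k))).flatten)[t] = g (aQ a + t) := by
  induction n with
  | zero => simp
  | succ n ih =>
    have hrw : ((List.range (n + 1)).map (fun k : ℕ => c (a + k))).flatten
        = ((List.range n).map (fun k : ℕ => c (a + k))).flatten ++ c (a + n) := by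
      rw [List.range_succ, List.map_append, List.flatten_append]
      simp
    have hcast : a + ((n : ℤ) + 1) = (a + (n : ℤ)) + 1 := by ring
    have hlen' := hlen (a + n)
    have hL : ((((List.range (n + 1)).map (fun k : ℕ => c (a + k))).flatten.length : ℤ)
        = aQ (a + (n + 1 : ℕ)) - aQ a) := by
      rw [hrw, List.length_append]
      push_cast
      rw [hcast]
      omega
    refine ⟨hL, ?_⟩
    intro t ht
    rw [List.getElem_of_eq hrw]
    have ht' : t < (((List.range n).map (fun k : ℕ => c (a + k))).flatten ++ c (a + n)).length := by
      rw [← hrw]; exact ht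
    set L := ((List.range n).map (fun k : ℕ => c (a + k))).flatten with hLdef
    by_cases hlt : t < L.length
    · rw [List.getElem_append_left hlt]
      exact ih.2 t hlt
    · push_neg at hlt
      rw [List.getElem_append_right hlt]
      rw [hget (a + n) (t - L.length) (by simp only [List.length_append] at ht'; omega)]
      congr 1
      have := ih.1
      push_cast [Nat.cast_sub hlt]
      omega

end ProducesCompAux


open ProducesCompAux in
/-- If `ω` produces `ω'` with respect to `P` under `R₁`, and `ω'`
produces `ω''` with respect to `Q` under `R₂`, then `P ∘ Q` is a parent function and
`ω` produces `ω''` with respect to `P ∘ Q` under the composite relation `R₁ ⋆ R₂`. -/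
theorem produces_comp {A : Type*} [Fintype A]
    (R₁ R₂ : Set (A × List A)) (hR₁ : R₁.Finite) (hR₂ : R₂.Finite)
    (P Q : ℤ → ℤ) (hP : IsParent P) (hQ : IsParent Q)
    (ω ω' ω'' : ℤ → A)
    (h₁ : Produces R₁ P ω ω') (h₂ : Produces R₂ Q ω' ω'') :
    IsParent (P ∘ Q) ∧ Produces (RelComp R₁ R₂) (P ∘ Q) ω ω'' := by
  have hPQ : IsParent (P ∘ Q) := isParent_comp hP hQ
  refine ⟨hPQ, ?_⟩
  choose c hc1 hc2 hc3 using h₂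
  intro i
  obtain ⟨w, hw1, hw2, hw3⟩ := h₁ i
  have hwlen : w.length = pN P i := hw2
  have hflat := flatten_len_get c (pA Q) ω''
    (fun j => by rw [pA_succ hQ j, hc2 j]; rfl)
    (fun j k hk => by
      have := hc3 j k hk
      simpa [List.get_eq_getElem, pA, pfib] using this)
    (pA P i) (pN P i)
  refine ⟨((List.range (pN P i)).map (fun k : ℕ => c (pA P i + k))).flatten, ?_, ?_, ?_⟩
  · refine ⟨w, (List.range (pN P i)).map (fun k : ℕ => c (pA P i + k)), hw1, ?_, rfl⟩
    rw [List.forall₂_iff_get]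
    refine ⟨by simp [hwlen], ?_⟩
    intro k hk1 hk2
    have hget : ((List.range (pN P i)).map (fun k : ℕ => c (pA P i + k))).get
        ⟨k, hk2⟩ = c (pA P i + k) := by
      simp
    rw [hget, hw3 k hk1]
    exact hc1 (pA P i + k)
  · have e1 : pA Q (pA P i + pN P i) = pA (P ∘ Q) (i + 1) := by
      rw [pA_comp hP hQ, pA_succ hP]
    have e2 : pA Q (pA P i) = pA (P ∘ Q) i := (pA_comp hP hQ i).symm
    have e3 : pA (P ∘ Q) (i + 1) = pA (P ∘ Q) i + pN (P ∘ Q) i := pA_succ hPQ i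
    have hl := hflat.1
    have : ((((List.range (pN P i)).map (fun k : ℕ => c (pA P i + k))).flatten.length : ℤ))
        = (pN (P ∘ Q) i : ℤ) := by
      rw [hl, e1, e2, e3]; ring
    have hfinal : (((List.range (pN P i)).map (fun k : ℕ => c (pA P i + k))).flatten.length)
        = pN (P ∘ Q) i := by exact_mod_cast this
    exact hfinal
  · intro k hk
    have e2 : pA Q (pA P i) = pA (P ∘ Q) i := (pA_comp hP hQ i).symm
    have := hflat.2 k hk
    rw [List.get_eq_getElem, this, e2]
    rfl
end

section
/- Let (A, R) be a non-deterministic substitution with an expanding eigenvalue λ > 1 witnessed by v : A → ℝ with v(a) > 0 for all a, let Ω = {(ω^i, P_i)}_{i∈ℤ} be an orbit of (A, R), and let Ψ : ℤ × ℤ → ℝ × ℝ satisfy Ψ(0,0) = (0,0) and, for all (i,j) with Ψ(i,j) = (x,y): Ψ(i, j+1) = (x + v(ω^i_j)·e^y, y) and Ψ(i+1, min P_{i+1}⁻¹({j})) = (x, y − log λ). Then for every point (p₁, p₂) ∈ ℝ² there exists a unique pair (i,j) ∈ ℤ² such that, writing Ψ(i,j) = (x,y), one has x ≤ p₁ < x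 + v(ω^i_j)·e^y and y − log λ < p₂ ≤ y; that is, the (A,R)-tiles placed at the positions Ψ(i,j) cover ℝ² with pairwise disjoint interiors. -/
private lemma grow_aux (g : ℤ → ℝ) (c : ℝ) (hstep : ∀ j : ℤ, g j + c ≤ g (j + 1)) :
    ∀ j k : ℤ, j ≤ k → g j + ((k - j : ℤ) : ℝ) * c ≤ g k := by
  intro j
  refine Int.le_induction (by simp) ?_
  intro n hn ih
  have h2 := hstep n
  push_cast at ih ⊢
  linarith

/-- Let `(A, R)` have expanding eigenvalue `λ > 1` witnessed by a
positive `v`, let `(ω, P)` be an orbit and `Ψ` a tiling for it with `Ψ(0,0) = (0,0)`.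
Then for every point `(p₁, p₂) ∈ ℝ²` there is a unique `(i,j) ∈ ℤ²` such that, writing
`(x,y) = Ψ(i,j)`, one has `x ≤ p₁ < x + v(ω^i_j)·e^y` and `y - log λ < p₂ ≤ y`: the
`(A,R)`-tiles placed at the positions `Ψ(i,j)` cover `ℝ²` with pairwise disjoint
interiors. -/
theorem substitution_tiles_cover {A : Type*} [Fintype A]
    (R : Set (A × List A)) (hRfin : R.Finite)
    (lam : ℝ) (v : A → ℝ) (hlam : 1 < lam) (hv : ∀ a : A, 0 < v a)
    (hexp : ∀ p ∈ R, lam * v p.1 = (p.2.map v).sum)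
    (ω : ℤ → ℤ → A) (P : ℤ → ℤ → ℤ) (horb : IsOrbit R ω P)
    (Ψ : ℤ × ℤ → ℝ × ℝ) (h0 : Ψ (0, 0) = (0, 0))
    (hrow : ∀ i j : ℤ,
      Ψ (i, j + 1) = ((Ψ (i, j)).1 + v (ω i j) * Real.exp (Ψ (i, j)).2, (Ψ (i, j)).2))
    (hcol : ∀ i j : ℤ,
      Ψ (i + 1, sInf {k : ℤ | P (i + 1) k = j}) =
        ((Ψ (i, j)).1, (Ψ (i, j)).2 - Real.log lam)) :
    ∀ p : ℝ × ℝ, ∃! ij : ℤ × ℤ,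
      (Ψ ij).1 ≤ p.1 ∧ p.1 < (Ψ ij).1 + v (ω ij.1 ij.2) * Real.exp (Ψ ij).2 ∧
      (Ψ ij).2 - Real.log lam < p.2 ∧ p.2 ≤ (Ψ ij).2 := by
  set L := Real.log lam with hLdef
  have hL : 0 < L := Real.log_pos hlam
  have h0y : (Ψ (0, 0)).2 = 0 := by rw [h0]
  -- the second coordinate is constant along rows
  have hrowy : ∀ i j : ℤ, (Ψ (i, j)).2 = (Ψ (i, 0)).2 := by
    intro i j
    induction j using Int.induction_on with
    | zero => rfl
    | succ k ih => rw [hrow i k]; exact ih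
    | pred k ih =>
        have h := hrow i (-(k : ℤ) - 1)
        rw [show (-(k : ℤ) - 1) + 1 = -k by ring] at h
        rw [h] at ih
        simpa using ih
  -- the second coordinate of row `i` is `-i * L`
  have hy0 : ∀ i : ℤ, (Ψ (i, 0)).2 = -(i : ℝ) * L := by
    intro i
    induction i using Int.induction_on with
    | zero => simpa using h0y
    | succ k ih =>
        have h := hcol k 0
        have h2 := hrowy (k + 1) (sInf {m : ℤ | P (k + 1) m = 0})
        rw [h] at h2
        simp only at h2
        rw [ih] at h2
        push_cast at h2 ⊢
        linarith
    | pred k ih =>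
        have h := hcol (-(k : ℤ) - 1) 0
        rw [show (-(k : ℤ) - 1) + 1 = -k by ring] at h
        have h2 := hrowy (-(k : ℤ)) (sInf {m : ℤ | P (-(k : ℤ)) m = 0})
        rw [h] at h2
        simp only at h2
        rw [ih] at h2
        push_cast at h2 ⊢
        linarith
  have hy : ∀ i j : ℤ, (Ψ (i, j)).2 = -(i : ℝ) * L := fun i j =>
    (hrowy i j).trans (hy0 i)
  -- a positive lower bound on v
  haveI : Nonempty A := ⟨ω 0 0⟩
  set m : ℝ := Finset.univ.inf' Finset.univ_nonempty v with hmdef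
  have hm : 0 < m := (Finset.lt_inf'_iff _).mpr fun a _ => hv a
  have hmle : ∀ a : A, m ≤ v a := fun a => Finset.inf'_le v (Finset.mem_univ a)
  intro p
  -- the unique row index
  set i₀ : ℤ := ⌊-p.2 / L⌋ with hi₀def
  have hi1 : (i₀ : ℝ) * L ≤ -p.2 := (le_div_iff₀ hL).mp (Int.floor_le _)
  have hi2 : -p.2 < ((i₀ : ℝ) + 1) * L := (div_lt_iff₀ hL).mp (Int.lt_floor_add_one _)
  -- the x-coordinates along row i₀
  set g : ℤ → ℝ := fun j => (Ψ (i₀, j)).1 with hgdef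
  set c : ℝ := m * Real.exp (-(i₀ : ℝ) * L) with hcdef
  have hc : 0 < c := mul_pos hm (Real.exp_pos _)
  have hgrow1 : ∀ j : ℤ, g (j + 1) = g j + v (ω i₀ j) * Real.exp (-(i₀ : ℝ) * L) := by
    intro j
    show (Ψ (i₀, j + 1)).1 = _
    rw [hrow i₀ j, hy i₀ j]
  have hstep : ∀ j : ℤ, g j + c ≤ g (j + 1) := by
    intro j
    rw [hgrow1 j]
    have := mul_le_mul_of_nonneg_right (hmle (ω i₀ j)) (Real.exp_pos (-(i₀ : ℝ) * L)).le
    linarith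
  have hgrow := grow_aux g c hstep
  have hmono : ∀ j k : ℤ, j ≤ k → g j ≤ g k := by
    intro j k hjk
    have h1 := hgrow j k hjk
    have h2 : (0 : ℝ) ≤ ((k - j : ℤ) : ℝ) * c := by
      apply mul_nonneg _ hc.le
      exact_mod_cast sub_nonneg.mpr hjk
    linarith
  -- existence of a greatest j with g j ≤ p.1
  have Hinh : ∃ z : ℤ, g z ≤ p.1 := by
    refine ⟨min 0 ⌊(p.1 - g 0) / c⌋, ?_⟩
    set j₁ : ℤ := min 0 ⌊(p.1 - g 0) / c⌋ with hj₁def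
    have hj₁0 : j₁ ≤ 0 := min_le_left _ _
    have hj₁c : (j₁ : ℝ) ≤ (p.1 - g 0) / c := by
      calc (j₁ : ℝ) ≤ (⌊(p.1 - g 0) / c⌋ : ℝ) := by exact_mod_cast min_le_right _ _
        _ ≤ _ := Int.floor_le _
    have h1 := hgrow j₁ 0 hj₁0
    have h2 : (j₁ : ℝ) * c ≤ p.1 - g 0 := (le_div_iff₀ hc).mp hj₁c
    push_cast at h1
    linarith
  have Hbdd : ∃ b : ℤ, ∀ z : ℤ, g z ≤ p.1 → z ≤ b := by
    refine ⟨max 0 ⌈(p.1 - g 0) / c⌉, fun z hz => ?_⟩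
    rcases le_or_gt z 0 with h | h
    · exact h.trans (le_max_left _ _)
    · have h1 := hgrow 0 z h.le
      push_cast at h1
      have h2 : (z : ℝ) * c ≤ p.1 - g 0 := by linarith
      have h3 : (z : ℝ) ≤ (p.1 - g 0) / c := (le_div_iff₀ hc).mpr h2
      have h4 : (z : ℝ) ≤ (⌈(p.1 - g 0) / c⌉ : ℝ) := h3.trans (Int.le_ceil _)
      exact le_trans (by exact_mod_cast h4) (le_max_right _ _)
  obtain ⟨j₀, hj₀, hmax⟩ := Int.exists_greatest_of_bdd Hbdd Hinh
  have hj₀1 : p.1 < g (j₀ + 1) := by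
    by_contra hcon
    push_neg at hcon
    have := hmax (j₀ + 1) hcon
    omega
  refine ⟨(i₀, j₀), ⟨hj₀, ?_, ?_, ?_⟩, ?_⟩
  · rw [hgrow1 j₀] at hj₀1
    simpa [hy i₀ j₀] using hj₀1
  · rw [hy i₀ j₀]; push_cast at hi2 ⊢; linarith
  · rw [hy i₀ j₀]; linarith
  -- uniqueness
  · rintro ⟨i, j⟩ ⟨hq1, hq2, hq3, hq4⟩
    simp only at hq1 hq2 hq3 hq4
    rw [hy i j] at hq2 hq3 hq4
    -- first: i = i₀
    have hii : i = i₀ := by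
      have ha : -(i : ℝ) * L - L < -(i₀ : ℝ) * L := by linarith
      have hb : -(i₀ : ℝ) * L - L < -(i : ℝ) * L := by push_cast at hi2 ⊢; linarith
      have ha' : (i₀ : ℝ) < (i : ℝ) + 1 := by
        have := (mul_lt_mul_iff_left₀ hL).mp (by linarith : (-(i : ℝ) - 1) * L < -(i₀ : ℝ) * L)
        linarith
      have hb' : (i : ℝ) < (i₀ : ℝ) + 1 := by
        have := (mul_lt_mul_iff_left₀ hL).mp (by linarith : (-(i₀ : ℝ) - 1) * L < -(i : ℝ) * L)
        linarith
      have ha'' : i₀ < i + 1 := by exact_mod_cast ha'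
      have hb'' : i < i₀ + 1 := by exact_mod_cast hb'
      omega
    subst hii
    have hgj : g j ≤ p.1 := hq1
    have hgj1 : p.1 < g (j + 1) := by
      rw [hgrow1 j]
      exact hq2
    have hjle : j ≤ j₀ := hmax j hgj
    have : j₀ ≤ j := by
      by_contra hcon
      push_neg at hcon
      have : g (j + 1) ≤ g j₀ := hmono (j + 1) j₀ (by omega)
      linarith
    have : j = j₀ := le_antisymm hjle this
    simp [this]
end
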